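/- Let G be a finite group, B a G-module, A ⊆ B a G-submodule, C = B/A the quotient G-module with quotient map μ : B → C, and let N denote the norm map N(m) = ∑_{g ∈ G} g·m on each of these modules. Then the assignment sending an element z = N(x) of A ∩ N(B) (for any x ∈ B with N(x) = z) to the class of μ(x) induces a well-defined injective group homomorphism from (A ∩ N(B)) / N(A) to ker(N : C → C) / (I_G·C + μ(ker(N : B → B))). -/

import Mathlib

/-- The norm map `m ↦ ∑_{g ∈ G} g • m` of a finite group `G` acting on an abelian
group `M`, as an additive homomorphism. -/
noncomputable def paperNormHom (G M : Type*) [Group G] [Fintype G] [AddCommGroup M]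
    [DistribMulAction G M] : M →+ M :=
  ∑ g : G, DistribMulAction.toAddMonoidHom M g

/-- The subgroup `I_G·M` generated by the elements `g • m - m`. -/
def paperAugSub (G M : Type*) [Group G] [AddCommGroup M] [DistribMulAction G M] :
    AddSubgroup M :=
  AddSubgroup.closure {x : M | ∃ (g : G) (m : M), x = g • m - m}

lemma paperNormHom_apply {G M : Type*} [Group G] [Fintype G] [AddCommGroup M]
    [DistribMulAction G M] (m : M) : paperNormHom G M m = ∑ g : G, g • m := by
  simp [paperNormHom]

lemma paperNormHom_smul {G M : Type*} [Group G] [Fintype G] [AddCommGroup M]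
    [DistribMulAction G M] (g : G) (m : M) :
    paperNormHom G M (g • m) = paperNormHom G M m := by
  rw [paperNormHom_apply, paperNormHom_apply]
  exact Fintype.sum_equiv (Equiv.mulRight g) _ _ (fun h => by simp [smul_smul])

/-- Let `G` be a finite group, `A ⊆ B` an inclusion of `G`-modules with
quotient `μ : B → C` (formalized as a short exact sequence of `G`-modules
`0 → A →ι B →μ C → 0`), and let `N` denote the norm map on each module.  Sending
`z = N(x) ∈ A ∩ N(B)` to the class of `μ(x)` gives a well-defined injective homomorphism
`(A ∩ N(B)) / N(A) → ker(N : C → C) / (I_G·C + μ(ker(N : B → B)))`. -/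
theorem stmt7 {G A B C : Type} [Group G] [Fintype G]
    [AddCommGroup A] [AddCommGroup B] [AddCommGroup C]
    [DistribMulAction G A] [DistribMulAction G B] [DistribMulAction G C]
    (ι : A →+ B) (μ : B →+ C) (hι : Function.Injective ι) (hμ : Function.Surjective μ)
    (hexact : ∀ b : B, μ b = 0 ↔ b ∈ ι.range)
    (hιG : ∀ (g : G) (a : A), ι (g • a) = g • ι a)
    (hμG : ∀ (g : G) (b : B), μ (g • b) = g • μ b) :
    ∃ ψ : ((ι.range ⊓ (paperNormHom G B).range : AddSubgroup B) ⧸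
            ((ι.comp (paperNormHom G A)).range.addSubgroupOf
              (ι.range ⊓ (paperNormHom G B).range))) →+
          (((paperNormHom G C).ker : AddSubgroup C) ⧸
            ((paperAugSub G C ⊔ (paperNormHom G B).ker.map μ).addSubgroupOf (paperNormHom G C).ker)),
      Function.Injective ψ ∧
        ∀ (x : B) (hx : paperNormHom G B x ∈ ι.range) (hc : μ x ∈ (paperNormHom G C).ker),
          ψ (QuotientAddGroup.mk ⟨paperNormHom G B x, hx, ⟨x, rfl⟩⟩)
            = QuotientAddGroup.mk ⟨μ x, hc⟩ := by
  classical
  have hNι : ∀ a : A, paperNormHom G B (ι a) = ι (paperNormHom G A a) := by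
    intro a; simp [paperNormHom_apply, map_sum, hιG]
  have hNμ : ∀ b : B, paperNormHom G C (μ b) = μ (paperNormHom G B b) := by
    intro b; simp [paperNormHom_apply, map_sum, hμG]
  -- the sup collapses to the image of the kernel
  have hsup : paperAugSub G C ⊔ (paperNormHom G B).ker.map μ
      = (paperNormHom G B).ker.map μ := by
    rw [sup_eq_right, paperAugSub]
    rw [AddSubgroup.closure_le]
    rintro x ⟨g, c, rfl⟩
    obtain ⟨b, rfl⟩ := hμ c
    exact ⟨g • b - b, by simp [AddMonoidHom.mem_ker, map_sub, paperNormHom_smul],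
      by simp [map_sub, hμG]⟩
  have memK : ∀ x : B, paperNormHom G B x ∈ ι.range → μ x ∈ (paperNormHom G C).ker := by
    intro x hx
    obtain ⟨a, ha⟩ := hx
    rw [AddMonoidHom.mem_ker, hNμ, ← ha]
    exact (hexact _).mpr ⟨a, rfl⟩
  set S := ι.range ⊓ (paperNormHom G B).range with hS
  set D := ((paperAugSub G C ⊔ (paperNormHom G B).ker.map μ).addSubgroupOf
    (paperNormHom G C).ker) with hD
  -- difference lemma
  have hdiff : ∀ x y : B, paperNormHom G B x = paperNormHom G B y →
      μ y - μ x ∈ (paperNormHom G B).ker.map μ := by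
    intro x y h
    exact ⟨y - x, by simp [AddMonoidHom.mem_ker, map_sub, h], by simp [map_sub]⟩
  have hmk : ∀ (u v : (paperNormHom G C).ker),
      (v : C) - u ∈ (paperNormHom G B).ker.map μ →
      (QuotientAddGroup.mk u : _ ⧸ D) = QuotientAddGroup.mk v := by
    intro u v huv
    rw [QuotientAddGroup.eq, hD, AddSubgroup.mem_addSubgroupOf, hsup]
    simpa [neg_add_eq_sub] using huv
  -- the choice function
  have pick_mem : ∀ s : ↥S, (s : B) ∈ (paperNormHom G B).range :=
    fun s => (AddSubgroup.mem_inf.mp s.2).2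
  set pick : ↥S → B := fun s => (pick_mem s).choose with hpickdef
  have hpick : ∀ s : ↥S, paperNormHom G B (pick s) = (s : B) :=
    fun s => (pick_mem s).choose_spec
  have hpickι : ∀ s : ↥S, paperNormHom G B (pick s) ∈ ι.range := by
    intro s; rw [hpick]; exact (AddSubgroup.mem_inf.mp s.2).1
  have hpickker : ∀ s : ↥S, μ (pick s) ∈ (paperNormHom G C).ker :=
    fun s => memK _ (hpickι s)
  have hadd : ∀ s t : ↥S,
      (QuotientAddGroup.mk ⟨μ (pick (s + t)), hpickker _⟩ : _ ⧸ D)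
      = QuotientAddGroup.mk ⟨μ (pick s), hpickker s⟩
        + QuotientAddGroup.mk ⟨μ (pick t), hpickker t⟩ := by
    intro s t
    rw [← QuotientAddGroup.mk_add]
    have h1 : paperNormHom G B (pick (s + t)) = paperNormHom G B (pick s + pick t) := by
      rw [map_add, hpick, hpick, hpick]; rfl
    have h2 : (⟨μ (pick s), hpickker s⟩ + ⟨μ (pick t), hpickker t⟩ :
        (paperNormHom G C).ker) = ⟨μ (pick s + pick t), memK _ (by
          rw [← h1]; exact hpickι _)⟩ := by
      exact Subtype.ext (map_add μ _ _).symm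
    rw [h2]
    exact hmk _ _ (hdiff _ _ h1)
  set f : ↥S →+ ((paperNormHom G C).ker ⧸ D) :=
    AddMonoidHom.mk' (fun s => QuotientAddGroup.mk ⟨μ (pick s), hpickker s⟩) hadd with hf
  have hfapp : ∀ s : ↥S, f s = QuotientAddGroup.mk ⟨μ (pick s), hpickker s⟩ := fun s => rfl
  -- kernel characterization
  have hker : ∀ s : ↥S, f s = 0 ↔
      s ∈ (ι.comp (paperNormHom G A)).range.addSubgroupOf S := by
    intro s
    rw [hfapp, QuotientAddGroup.eq_zero_iff, hD, AddSubgroup.mem_addSubgroupOf, hsup,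
      AddSubgroup.mem_addSubgroupOf]
    constructor
    · rintro ⟨k, hk, hk2⟩
      have h0 : μ (pick s - k) = 0 := by
        rw [map_sub, hk2, sub_self]
      obtain ⟨a, ha⟩ := (hexact _).mp h0
      refine ⟨a, ?_⟩
      have : paperNormHom G B (pick s - k) = (s : B) := by
        rw [map_sub, hpick, AddMonoidHom.mem_ker.mp hk, sub_zero]
      rw [AddMonoidHom.comp_apply, ← hNι, ha, this]
    · rintro ⟨a, ha⟩
      rw [AddMonoidHom.comp_apply] at ha
      refine ⟨pick s - ι a, ?_, ?_⟩
      · show paperNormHom G B (pick s - ι a) = 0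
        rw [map_sub, hpick, hNι, ha, sub_self]
      · have : μ (ι a) = 0 := (hexact _).mpr ⟨a, rfl⟩
        rw [map_sub, this, sub_zero]
  refine ⟨QuotientAddGroup.lift _ f (fun s hs => AddMonoidHom.mem_ker.mpr ((hker s).mpr hs)), ?_, ?_⟩
  · intro p q
    induction p using QuotientAddGroup.induction_on with
    | H s =>
    induction q using QuotientAddGroup.induction_on with
    | H t =>
    intro h
    rw [QuotientAddGroup.lift_mk, QuotientAddGroup.lift_mk] at h
    rw [QuotientAddGroup.eq]
    apply (hker _).mp
    rw [map_add, map_neg, h, neg_add_cancel]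
  · intro x hx hc
    rw [QuotientAddGroup.lift_mk, hfapp]
    apply hmk
    apply hdiff
    exact hpick ⟨paperNormHom G B x, hx, ⟨x, rfl⟩⟩
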